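/- Let η_0, η_1, ... be i.i.d. Bernoulli random variables with P(η_k = 1) = 1 − ε, P(η_k = 0) = ε, ε ∈ (0,1), and let X_{n+1} = a·X_n + b·η_{n-1}·X_{n-1} with X_0 = 1, X_1 = a, 0 < a < 1, b > 1 − a. Then E[X_n] = (λ₁'^{n+1} − λ₂'^{n+1})/(λ₁' − λ₂') for all n ≥ 0, where λ₁' and λ₂' are the roots of λ² = aλ + b(1 − ε). -/

import Mathlib

open MeasureTheory ProbabilityTheory

/-- Auxiliary recursive function expressing `X n` as a function of the noise sequence. -/
noncomputable def hfun (a b : ℝ) : ℕ → (ℕ → ℝ) → ℝ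
  | 0 => fun _ => 1
  | 1 => fun _ => a
  | (k + 2) => fun e => a * hfun a b (k + 1) e + b * e k * hfun a b k e

lemma hfun_meas (a b : ℝ) : ∀ k, Measurable (hfun a b k)
  | 0 => measurable_const
  | 1 => measurable_const
  | (k + 2) => by
      simp only [hfun]
      exact ((measurable_const.mul (hfun_meas a b (k + 1))).add
        ((measurable_const.mul (measurable_pi_apply k)).mul (hfun_meas a b k)))

lemma hfun_congr (a b : ℝ) : ∀ k (e e' : ℕ → ℝ), (∀ i, i + 2 ≤ k → e i = e' i) →
    hfun a b k e = hfun a b k e'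
  | 0, _, _, _ => rfl
  | 1, _, _, _ => rfl
  | (k + 2), e, e', h => by
      simp only [hfun]
      rw [hfun_congr a b (k + 1) e e' (fun i hi => h i (by omega)),
        hfun_congr a b k e e' (fun i hi => h i (by omega)), h k (by omega)]

theorem stmt_12 (a b ε : ℝ) (ha0 : 0 < a) (ha1 : a < 1) (hb : b > 1 - a)
    (hε0 : 0 < ε) (hε1 : ε < 1)
    {Ω : Type*} [MeasurableSpace Ω] (μ : Measure Ω) [IsProbabilityMeasure μ]
    (η : ℕ → Ω → ℝ) (hmeas : ∀ k, Measurable (η k))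
    (hval : ∀ k ω, η k ω = 0 ∨ η k ω = 1)
    (hindep : iIndepFun η μ)
    (hBer : ∀ k, μ {ω | η k ω = 1} = ENNReal.ofReal (1 - ε))
    (X : ℕ → Ω → ℝ) (hX0 : ∀ ω, X 0 ω = 1) (hX1 : ∀ ω, X 1 ω = a)
    (hrec : ∀ n : ℕ, 1 ≤ n → ∀ ω,
      X (n + 1) ω = a * X n ω + b * η (n - 1) ω * X (n - 1) ω) :
    ∀ n : ℕ,
      (∫ ω, X n ω ∂μ)
        = (((a + Real.sqrt (a ^ 2 + 4 * b * (1 - ε))) / 2) ^ (n + 1)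
            - ((a - Real.sqrt (a ^ 2 + 4 * b * (1 - ε))) / 2) ^ (n + 1))
          / ((a + Real.sqrt (a ^ 2 + 4 * b * (1 - ε))) / 2
            - (a - Real.sqrt (a ^ 2 + 4 * b * (1 - ε))) / 2) := by
  classical
  -- X n as a function of the noise
  have hXeq : ∀ n ω, X n ω = hfun a b n (fun i => η i ω) := by
    intro n
    induction n using Nat.strong_induction_on with
    | _ n ih =>
      match n with
      | 0 => intro ω; simp [hfun, hX0]
      | 1 => intro ω; simp [hfun, hX1]
      | (k + 2) =>
        intro ω
        have := hrec (k + 1) (by omega) ω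
        simp only [Nat.add_sub_cancel] at this
        rw [this, ih (k + 1) (by omega) ω, ih k (by omega) ω]
        simp [hfun]
  have hXmeas : ∀ n, Measurable (X n) := by
    intro n
    have : X n = fun ω => hfun a b n (fun i => η i ω) := funext (hXeq n)
    rw [this]
    exact (hfun_meas a b n).comp (measurable_pi_lambda _ (fun i => hmeas i))
  have hηbd : ∀ k ω, ‖η k ω‖ ≤ 1 := by
    intro k ω; rcases hval k ω with h | h <;> simp [h]
  have hXint : ∀ n, Integrable (X n) μ := by
    intro n
    induction n using Nat.strong_induction_on with
    | _ n ih =>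
      match n with
      | 0 => exact (integrable_const 1).congr (by simp [Filter.EventuallyEq, hX0])
      | 1 => exact (integrable_const a).congr (by simp [Filter.EventuallyEq, hX1])
      | (k + 2) =>
        have h1 : Integrable (fun ω => a * X (k + 1) ω) μ :=
          (ih (k + 1) (by omega)).const_mul a
        have h2 : Integrable (fun ω => η k ω * X k ω) μ :=
          (ih k (by omega)).bdd_mul (hmeas k).aestronglyMeasurable (Filter.Eventually.of_forall (hηbd k))
        have h3 : Integrable (fun ω => b * (η k ω * X k ω)) μ := h2.const_mul b
        have heq2 : X (k + 2) = fun ω => a * X (k + 1) ω + b * (η k ω * X k ω) := by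
          funext ω
          have := hrec (k + 1) (by omega) ω
          simp only [Nat.add_sub_cancel] at this
          rw [this]; ring
        rw [heq2]
        exact h1.add h3
  -- independence of X k and η k
  have hIndXη : ∀ k, IndepFun (X k) (η k) μ := by
    intro k
    have hd : Disjoint (Finset.range k) ({k} : Finset ℕ) := by
      simp [Finset.disjoint_singleton_right]
    have hfin := hindep.indepFun_finset (Finset.range k) {k} hd hmeas
    let g : (↥(Finset.range k) → ℝ) → ℝ := fun e =>
      hfun a b k (fun i => if h : i ∈ Finset.range k then e ⟨i, h⟩ else 0)
    have hgmeas : Measurable g := by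
      apply (hfun_meas a b k).comp
      apply measurable_pi_lambda
      intro i
      by_cases h : i ∈ Finset.range k
      · simpa [h] using (measurable_pi_apply (⟨i, h⟩ : (Finset.range k : Finset ℕ)))
      · simpa [h] using measurable_const
    let p : (↥({k} : Finset ℕ) → ℝ) → ℝ := fun e => e ⟨k, Finset.mem_singleton_self k⟩
    have hpmeas : Measurable p := measurable_pi_apply _
    have hcomp := hfin.comp hgmeas hpmeas
    have hXg : X k = g ∘ (fun ω (i : (Finset.range k : Finset ℕ)) => η i ω) := by
      funext ω
      simp only [Function.comp, g]
      rw [hXeq k ω]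
      apply hfun_congr
      intro i hi
      simp only [Finset.mem_range]
      rw [dif_pos (by omega)]
    have hηp : η k = p ∘ (fun ω (i : (({k} : Finset ℕ) : Finset ℕ)) => η i ω) := rfl
    rw [hXg, hηp]
    exact hcomp
  -- expectation of η k
  have hEη : ∀ k, (∫ ω, η k ω ∂μ) = 1 - ε := by
    intro k
    have hset : MeasurableSet {ω | η k ω = 1} := (hmeas k) (measurableSet_singleton 1)
    have : (fun ω => η k ω) = Set.indicator {ω | η k ω = 1} (fun _ => (1 : ℝ)) := by
      funext ω
      rcases hval k ω with h | h <;> simp [Set.indicator, h]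
    rw [this, integral_indicator_const _ hset, measureReal_def, hBer k]
    simp [ENNReal.toReal_ofReal (by linarith : (0:ℝ) ≤ 1 - ε)]
  -- the recursion for the means
  have hmrec : ∀ k : ℕ, (∫ ω, X (k + 2) ω ∂μ)
      = a * (∫ ω, X (k + 1) ω ∂μ) + b * (1 - ε) * (∫ ω, X k ω ∂μ) := by
    intro k
    have heq : ∀ ω, X (k + 2) ω = a * X (k + 1) ω + b * (η k ω * X k ω) := by
      intro ω
      have := hrec (k + 1) (by omega) ω
      simp only [Nat.add_sub_cancel] at this
      rw [this]; ring
    have h2 : Integrable (fun ω => η k ω * X k ω) μ :=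
      (hXint k).bdd_mul (hmeas k).aestronglyMeasurable (Filter.Eventually.of_forall (hηbd k))
    calc (∫ ω, X (k + 2) ω ∂μ)
        = ∫ ω, (a * X (k + 1) ω + b * (η k ω * X k ω)) ∂μ := by
          exact integral_congr_ae (Filter.Eventually.of_forall heq)
      _ = a * (∫ ω, X (k + 1) ω ∂μ) + b * (∫ ω, η k ω * X k ω ∂μ) := by
          rw [integral_add ((hXint (k + 1)).const_mul a) (h2.const_mul b),
            integral_const_mul, integral_const_mul]
      _ = a * (∫ ω, X (k + 1) ω ∂μ) + b * ((1 - ε) * (∫ ω, X k ω ∂μ)) := by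
          have hmul : (∫ ω, η k ω * X k ω ∂μ)
              = (∫ ω, η k ω ∂μ) * ∫ ω, X k ω ∂μ := by
            have := ((hIndXη k).symm).integral_mul_eq_mul_integral (hmeas k).aestronglyMeasurable
              (hXmeas k).aestronglyMeasurable
            simpa [Pi.mul_apply] using this
          rw [hmul, hEη k]
      _ = a * (∫ ω, X (k + 1) ω ∂μ) + b * (1 - ε) * (∫ ω, X k ω ∂μ) := by ring
  -- setup of the roots
  set s := Real.sqrt (a ^ 2 + 4 * b * (1 - ε)) with hs
  have hc : 0 < b * (1 - ε) := by
    have hbpos : 0 < b := by linarith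
    nlinarith
  have hspos : 0 < s := Real.sqrt_pos.mpr (by nlinarith)
  have hs2 : s ^ 2 = a ^ 2 + 4 * b * (1 - ε) := Real.sq_sqrt (by nlinarith)
  set l1 := (a + s) / 2 with hl1
  set l2 := (a - s) / 2 with hl2
  have hdiff : l1 - l2 = s := by rw [hl1, hl2]; ring
  have hl1sq : l1 ^ 2 = a * l1 + b * (1 - ε) := by
    rw [hl1]; nlinarith [hs2]
  have hl2sq : l2 ^ 2 = a * l2 + b * (1 - ε) := by
    rw [hl2]; nlinarith [hs2]
  intro n
  induction n using Nat.strong_induction_on with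
  | _ n ih =>
    match n with
    | 0 =>
      have h0 : (∫ ω, X 0 ω ∂μ) = 1 := by
        rw [integral_congr_ae (Filter.Eventually.of_forall hX0)]
        simp
      have hne : l1 - l2 ≠ 0 := by rw [hdiff]; exact ne_of_gt hspos
      rw [h0, show (0 : ℕ) + 1 = 1 from rfl, pow_one, pow_one, div_self hne]
    | 1 =>
      have h1 : (∫ ω, X 1 ω ∂μ) = a := by
        rw [integral_congr_ae (Filter.Eventually.of_forall hX1)]
        simp
      have hne : l1 - l2 ≠ 0 := by rw [hdiff]; exact ne_of_gt hspos
      rw [h1, eq_div_iff hne]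
      have hsum : l1 + l2 = a := by rw [hl1, hl2]; ring
      linear_combination (-(l1 - l2)) * hsum
    | (k + 2) =>
      rw [hmrec k, ih (k + 1) (by omega), ih k (by omega)]
      have hne : l1 - l2 ≠ 0 := by rw [hdiff]; exact ne_of_gt hspos
      field_simp
      linear_combination (-(l1 ^ (k + 1))) * hl1sq + (l2 ^ (k + 1)) * hl2sq
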